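/- arXiv:1307.7806 — 4 statements merged into one kernel-verified Lean document; each statement's English description precedes it below -/
import Mathlib

section
/- Let G be a simple graph with at least 3 vertices and let G' be constructed as follows: pick a vertex x of G and split it into two copies a1, b1 (each adjacent to all neighbors of x, with no edge between a1 and b1); take two disjoint copies G1, G2 of this split graph, with a3, b3 the copies of a1, b1 in G2; add two new vertices a2, b2 and edges {a1,a2}, {a2,a3}, {b1,b2}, {b2,b3}. If G has a Hamiltonian cycle then G' has a Hamiltonian cycle. -/
/-- The graph obtained from `G` by splitting the vertex `x` into two nonadjacent copies
(`Sum.inl x` and `Sum.inr ()`), each adjacent to all neighbors of `x`. -/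
def splitVertex {V : Type*} (G : SimpleGraph V) (x : V) : SimpleGraph (V ⊕ Unit) :=
  SimpleGraph.fromRel (fun a b =>
    match a, b with
    | Sum.inl u, Sum.inl v => G.Adj u v
    | Sum.inl u, Sum.inr _ => G.Adj u x
    | Sum.inr _, Sum.inl v => G.Adj x v
    | Sum.inr _, Sum.inr _ => False)

/-- Two disjoint copies (indexed by `Fin 2`) of the split graph, joined by two fresh vertices
`Sum.inr 0 = a₂` (adjacent to `a₁ = Sum.inl (0, Sum.inl x)` and `a₃ = Sum.inl (1, Sum.inl x)`)
and `Sum.inr 1 = b₂` (adjacent to `b₁ = Sum.inl (0, Sum.inr ())` and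
`b₃ = Sum.inl (1, Sum.inr ())`). -/
def doubledGraph {V : Type*} (G : SimpleGraph V) (x : V) :
    SimpleGraph ((Fin 2 × (V ⊕ Unit)) ⊕ Fin 2) :=
  SimpleGraph.fromRel (fun a b =>
    match a, b with
    | Sum.inl (i, u), Sum.inl (j, v) => i = j ∧ (splitVertex G x).Adj u v
    | Sum.inl (_, u), Sum.inr c => (c = 0 ∧ u = Sum.inl x) ∨ (c = 1 ∧ u = Sum.inr ())
    | Sum.inr _, _ => False)

namespace HamAux

open SimpleGraph Walk

variable {V : Type*} {G : SimpleGraph V} {x : V}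

lemma split_adj_inl_inl {u v : V} (h : G.Adj u v) :
    (splitVertex G x).Adj (Sum.inl u) (Sum.inl v) := by
  rw [splitVertex, SimpleGraph.fromRel_adj]
  exact ⟨by simp [h.ne], Or.inl h⟩

lemma split_adj_inl_inr {u : V} (h : G.Adj u x) :
    (splitVertex G x).Adj (Sum.inl u) (Sum.inr ()) := by
  rw [splitVertex, SimpleGraph.fromRel_adj]
  exact ⟨by simp, Or.inl h⟩

lemma doubled_adj_inl {i : Fin 2} {u v : V ⊕ Unit} (h : (splitVertex G x).Adj u v) :
    (doubledGraph G x).Adj (Sum.inl (i, u)) (Sum.inl (i, v)) := by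
  rw [doubledGraph, SimpleGraph.fromRel_adj]
  exact ⟨by simp [h.ne], Or.inl ⟨rfl, h⟩⟩

lemma doubled_adj_a (i : Fin 2) :
    (doubledGraph G x).Adj (Sum.inl (i, Sum.inl x)) (Sum.inr 0) := by
  rw [doubledGraph, SimpleGraph.fromRel_adj]
  exact ⟨by simp, Or.inl (Or.inl ⟨rfl, rfl⟩)⟩

lemma doubled_adj_b (i : Fin 2) :
    (doubledGraph G x).Adj (Sum.inl (i, Sum.inr ())) (Sum.inr 1) := by
  rw [doubledGraph, SimpleGraph.fromRel_adj]
  exact ⟨by simp, Or.inl (Or.inr ⟨rfl, rfl⟩)⟩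

@[reducible] def copyHom (G : SimpleGraph V) (x : V) (i : Fin 2) :
    splitVertex G x →g doubledGraph G x :=
  ⟨fun u => Sum.inl (i, u), fun h => doubled_adj_inl h⟩

@[simp] lemma copyHom_apply (G : SimpleGraph V) (x : V) (i : Fin 2) (u : V ⊕ Unit) :
    copyHom G x i u = Sum.inl (i, u) := rfl

@[simp] lemma copyHom_coe (G : SimpleGraph V) (x : V) (i : Fin 2) :
    ⇑(copyHom G x i) = fun u => Sum.inl (i, u) := rfl

def liftEnd (G : SimpleGraph V) (x : V) :
    {u v : V} → G.Adj u v → G.Walk v x →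
      (splitVertex G x).Walk (Sum.inl u) (Sum.inr ())
  | _, _, h, Walk.nil => Walk.cons (split_adj_inl_inr h) Walk.nil
  | _, _, h, Walk.cons h' w => Walk.cons (split_adj_inl_inl h) (liftEnd G x h' w)

lemma liftEnd_support (G : SimpleGraph V) (x : V) :
    ∀ {u v : V} (h : G.Adj u v) (w : G.Walk v x),
    (liftEnd G x h w).support =
      ((Walk.cons h w).support.dropLast).map Sum.inl ++ [Sum.inr ()]
  | u, _, h, Walk.nil => by simp [liftEnd]
  | u, v, h, Walk.cons h' w => by
    have ih := liftEnd_support G x h' w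
    simp only [liftEnd, Walk.support_cons, ih, Walk.support_cons] at *
    rw [List.dropLast_cons₂]
    simp

lemma main {V : Type*} [Fintype V] [DecidableEq V] (G : SimpleGraph V) (x v : V)
    (h₁ : G.Adj x v) (t : G.Walk v x)
    (hd : (Walk.cons h₁ t).IsHamiltonianCycle) :
    ∃ (b : (Fin 2 × (V ⊕ Unit)) ⊕ Fin 2) (c' : (doubledGraph G x).Walk b b),
      c'.IsHamiltonianCycle := by
  classical
  letI : BEq (V ⊕ Unit) := instBEqOfDecidableEq
  letI : BEq ((Fin 2 × (V ⊕ Unit)) ⊕ Fin 2) := instBEqOfDecidableEq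
  have htc : ∀ y, t.support.count y = 1 := by
    have h := (Walk.isHamiltonianCycle_iff_isCycle_and_support_count_tail_eq_one.mp hd).2
    intro y
    simpa using h y
  set M := t.support.dropLast with hM
  have hts : t.support = M ++ [x] := by
    have h1 : t.support.getLast (by simp) = x := t.getLast_support
    conv_lhs => rw [← List.dropLast_append_getLast (l := t.support) (by simp)]
    rw [h1]
  have hMx : M.count x = 0 := by
    have h := htc x; rw [hts, List.count_append] at h; simpa using h
  have hMy : ∀ y, y ≠ x → M.count y = 1 := by
    intro y hy
    have h := htc y; rw [hts, List.count_append] at h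
    simpa [List.count_singleton, hy, Ne.symm hy] using h
  set P := liftEnd G x h₁ t with hP
  have hS : P.support = (Sum.inl x :: M.map Sum.inl) ++ [Sum.inr ()] := by
    rw [hP, liftEnd_support]
    rw [Walk.support_cons, hts, ← List.cons_append, List.dropLast_concat]
    simp
  have hSc : ∀ w : V ⊕ Unit, P.support.count w = 1 := by
    intro w
    rw [hS]
    match w with
    | Sum.inr () =>
      have h0 : List.count (Sum.inr () : V ⊕ Unit) (M.map Sum.inl) = 0 :=
        List.count_eq_zero.mpr (by simp)
      simp [List.count_append, List.count_cons, h0]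
    | Sum.inl u =>
      rw [List.count_append, List.count_cons,
        List.count_map_of_injective _ _ Sum.inl_injective]
      by_cases hu : u = x
      · subst hu; simp [hMx]
      · simp [hMy u hu, beq_iff_eq, Ne.symm hu]
  -- build the big cycle
  set P₀ := P.map (copyHom G x 0) with hP0
  set P₁ := P.map (copyHom G x 1) with hP1
  set Q : (doubledGraph G x).Walk (Sum.inl (0, Sum.inl x)) (Sum.inr 0) :=
    P₀.append (Walk.cons (doubled_adj_b 0) (Walk.cons (doubled_adj_b 1).symm
      (P₁.reverse.append (Walk.cons (doubled_adj_a 1) Walk.nil)))) with hQ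
  have hQs : Q.support =
      P.support.map (fun u => Sum.inl ((0 : Fin 2), u)) ++
        (Sum.inr 1 :: ((P.support.map (fun u => Sum.inl ((1 : Fin 2), u))).reverse
          ++ [Sum.inr 0])) := by
    rw [hQ, hP0, hP1]
    simp [Walk.support_append, Walk.support_cons, Walk.support_map, Walk.support_reverse,
      copyHom_coe]
  have hinj : ∀ i : Fin 2, Function.Injective
      (fun u : V ⊕ Unit => (Sum.inl (i, u) : (Fin 2 × (V ⊕ Unit)) ⊕ Fin 2)) := by
    intro i a b h
    simpa using h
  have hmapcount : ∀ (i j : Fin 2) (w : V ⊕ Unit),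
      List.count (Sum.inl (i, w) : (Fin 2 × (V ⊕ Unit)) ⊕ Fin 2)
        (P.support.map (fun u => Sum.inl (j, u))) = if i = j then 1 else 0 := by
    intro i j w
    by_cases hij : i = j
    · subst hij
      rw [List.count_map_of_injective _ _ (hinj i), hSc w]
      simp
    · rw [List.count_eq_zero.mpr (by simp [Ne.symm hij])]
      simp [hij]
  have key : ∀ z, Q.support.count z = 1 := by
    intro z
    rw [hQs]
    match z with
    | Sum.inr j =>
      rw [List.count_append, List.count_cons, List.count_append, List.count_reverse]
      rw [List.count_eq_zero.mpr (by simp), List.count_eq_zero.mpr (by simp)]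
      fin_cases j <;> simp [beq_iff_eq]
    | Sum.inl (i, w) =>
      rw [List.count_append, List.count_cons, List.count_append, List.count_reverse,
        hmapcount, hmapcount, List.count_eq_zero.mpr (by simp)]
      have h2 : ((Sum.inr 1 : (Fin 2 × (V ⊕ Unit)) ⊕ Fin 2) == Sum.inl (i, w)) = false := by
        simp
      rw [h2]
      fin_cases i <;> simp
  have Qnodup : Q.support.Nodup :=
    List.nodup_iff_count_le_one.mpr fun z => (key z).le
  have QPath : Q.IsPath := Walk.IsPath.mk' Qnodup
  have hedge : s(Sum.inr 0, (Sum.inl (0, Sum.inl x) : (Fin 2 × (V ⊕ Unit)) ⊕ Fin 2)) ∉ Q.edges := by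
    intro hmem
    rw [hQ] at hmem
    simp only [Walk.edges_append, Walk.edges_cons, List.mem_append, List.mem_cons] at hmem
    rcases hmem with h | h | h | h
    · have := Walk.fst_mem_support_of_mem_edges _ h
      rw [Walk.support_map] at this
      simp at this
    · simp [Sym2.eq_iff] at h
    · simp [Sym2.eq_iff] at h
    · rcases h with h | h
      · have := Walk.fst_mem_support_of_mem_edges _ h
        rw [Walk.support_reverse, Walk.support_map] at this
        simp at this
      · simp [Sym2.eq_iff] at h
  refine ⟨Sum.inr 0, Walk.cons (doubled_adj_a 0).symm Q, ?_⟩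
  rw [Walk.isHamiltonianCycle_iff_isCycle_and_support_count_tail_eq_one]
  refine ⟨(Walk.cons_isCycle_iff Q (doubled_adj_a 0).symm).mpr ⟨QPath, hedge⟩, ?_⟩
  intro z
  rw [Walk.support_cons, List.tail_cons]
  exact key z

end HamAux

/-- If `G` (with at least 3 vertices) has a Hamiltonian cycle, then the graph `G'` produced by the
splitting-and-doubling construction has a Hamiltonian cycle. -/
theorem stmt_1 {V : Type*} [Fintype V] [DecidableEq V] (G : SimpleGraph V)
    (hV : 3 ≤ Fintype.card V) (x : V)
    (a : V) (c : G.Walk a a) (hc : c.IsHamiltonianCycle) :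
    ∃ (b : (Fin 2 × (V ⊕ Unit)) ⊕ Fin 2) (c' : (doubledGraph G x).Walk b b),
      c'.IsHamiltonianCycle := by
  classical
  have hx : x ∈ c.support := hc.mem_support x
  obtain ⟨d, hd⟩ : ∃ d : G.Walk x x, d.IsHamiltonianCycle := by
    refine ⟨c.rotate x hx, ?_⟩
    rw [SimpleGraph.Walk.isHamiltonianCycle_iff_isCycle_and_support_count_tail_eq_one] at hc ⊢
    refine ⟨hc.1.rotate hx, fun z => ?_⟩
    rw [List.Perm.count_eq (SimpleGraph.Walk.support_rotate c x hx).perm]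
    exact hc.2 z
  cases d with
  | nil => exact absurd (by simp) hd.isCycle.not_nil
  | cons h₁ t => exact HamAux.main G x _ h₁ t hd
end

section
/- With G and G' as in the splitting-and-doubling construction (split a vertex of G into a1, b1; take two copies G1, G2; connect via new degree-2 vertices a2 between a1 and a3, and b2 between b1 and b3): if G has no Hamiltonian cycle, then G' has no Hamiltonian path. -/
namespace HamAux

attribute [-instance] Sum.instBEq

open SimpleGraph Walk

variable {V : Type*} [Fintype V] [DecidableEq V] {G : SimpleGraph V} {x : V}

section CountWrappers
variable {α : Type*} [DecidableEq α]

lemma ccs (a : α) (l : List α) : (a :: l).count a = l.count a + 1 :=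
  List.count_cons_self

lemma ccn {a b : α} (h : a ≠ b) (l : List α) : (b :: l).count a = l.count a :=
  List.count_cons_of_ne h.symm

lemma cap (a : α) (l₁ l₂ : List α) : (l₁ ++ l₂).count a = l₁.count a + l₂.count a :=
  List.count_append ..

lemma crev (a : α) (l : List α) : l.reverse.count a = l.count a := by
  simp [List.count_reverse]

lemma cz {a : α} {l : List α} : l.count a = 0 ↔ a ∉ l :=
  List.count_eq_zero

lemma cpos {a : α} {l : List α} : 0 < l.count a ↔ a ∈ l :=
  List.count_pos_iff

end CountWrappers

/-- The projection `V ⊕ Unit → V` collapsing both copies of `x` back to `x`. -/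
def fmap (x : V) : V ⊕ Unit → V := Sum.elim id fun _ => x

lemma adj_fmap {u v : V ⊕ Unit} (h : (splitVertex G x).Adj u v) :
    G.Adj (fmap x u) (fmap x v) := by
  rw [splitVertex, SimpleGraph.fromRel_adj] at h
  obtain ⟨hne, h | h⟩ := h <;>
    rcases u with u | u <;> rcases v with v | v <;>
      simp only [fmap, Sum.elim_inl, Sum.elim_inr, id] at h ⊢ <;>
      first
        | exact h
        | exact h.symm
        | exact h.elim

lemma count_fmap (x : V) (l : List (V ⊕ Unit)) (a : V) :
    (l.map (fmap x)).count a =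
      l.count (Sum.inl a) + if a = x then l.count (Sum.inr ()) else 0 := by
  induction l with
  | nil => simp
  | cons z l ih =>
    rcases z with z | z
    · show (z :: l.map (fmap x)).count a = _
      by_cases hz : z = a
      · subst hz
        rw [ccs, ccs,
          ccn (by simp : (Sum.inr () : V ⊕ Unit) ≠ Sum.inl z), ih]
        omega
      · rw [ccn (Ne.symm hz),
          ccn (fun hh => hz (Sum.inl.inj hh).symm),
          ccn (by simp : (Sum.inr () : V ⊕ Unit) ≠ Sum.inl z), ih]
    · show (x :: l.map (fmap x)).count a = _
      by_cases hax : a = x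
      · subst hax
        rw [ccs,
          ccn (by simp : (Sum.inl a : V ⊕ Unit) ≠ Sum.inr ()),
          ccs, ih, if_pos rfl, if_pos rfl]
        omega
      · rw [ccn hax,
          ccn (by simp : (Sum.inl a : V ⊕ Unit) ≠ Sum.inr ()),
          ih, if_neg hax, if_neg hax]

/-- The two "x-copies" in `V ⊕ Unit`, indexed by the connector index. -/
def vxc (x : V) : Fin 2 → V ⊕ Unit := ![Sum.inl x, Sum.inr ()]

lemma fmap_vxc (e : Fin 2) : fmap x (vxc x e) = x := by
  fin_cases e <;> simp [vxc, fmap]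

lemma adj_inr {a : (Fin 2 × (V ⊕ Unit)) ⊕ Fin 2} {c : Fin 2} :
    (doubledGraph G x).Adj (Sum.inr c) a ↔ ∃ i : Fin 2, a = Sum.inl (i, vxc x c) := by
  rw [doubledGraph, SimpleGraph.fromRel_adj]
  constructor
  · rintro ⟨hne, h | h⟩
    · exact h.elim
    · rcases a with ⟨i, u⟩ | e
      · refine ⟨i, ?_⟩
        rcases h with ⟨rfl, rfl⟩ | ⟨rfl, rfl⟩ <;> simp [vxc]
      · exact h.elim
  · rintro ⟨i, rfl⟩
    refine ⟨by simp, Or.inr ?_⟩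
    fin_cases c <;> simp [vxc]

lemma adj_inl_inl {i j : Fin 2} {u v : V ⊕ Unit} :
    (doubledGraph G x).Adj (Sum.inl (i, u)) (Sum.inl (j, v)) ↔
      i = j ∧ (splitVertex G x).Adj u v := by
  rw [doubledGraph, SimpleGraph.fromRel_adj]
  constructor
  · rintro ⟨hne, ⟨rfl, h⟩ | ⟨rfl, h⟩⟩
    · exact ⟨rfl, h⟩
    · exact ⟨rfl, h.symm⟩
  · rintro ⟨rfl, h⟩
    exact ⟨by simp [h.ne], Or.inl ⟨rfl, h⟩⟩

/-- A walk in the doubled graph which starts in copy `i` and avoids both connector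
vertices stays in copy `i` and projects to a walk in the split graph. -/
lemma proj {s t : (Fin 2 × (V ⊕ Unit)) ⊕ Fin 2} (w : (doubledGraph G x).Walk s t) :
    ∀ (i : Fin 2) (y : V ⊕ Unit), s = Sum.inl (i, y) →
    (∀ a ∈ w.support, ∀ c : Fin 2, a ≠ Sum.inr c) →
    ∃ (z : V ⊕ Unit) (w' : (splitVertex G x).Walk y z),
      t = Sum.inl (i, z) ∧ w.support = w'.support.map (fun u => Sum.inl (i, u)) := by
  induction w with
  | nil =>
    intro i y hs _
    exact ⟨y, Walk.nil, hs, by simp [hs]⟩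
  | @cons a b t h p ih =>
    intro i y hs hsup
    subst hs
    have hb : ∀ c : Fin 2, b ≠ Sum.inr c := fun c =>
      hsup b (by rw [support_cons]; exact List.mem_cons_of_mem _ p.start_mem_support) c
    rcases b with ⟨j, y'⟩ | c
    · obtain ⟨rfl, hyy'⟩ := adj_inl_inl.mp h
      obtain ⟨z, w', ht, hmap⟩ := ih i y' rfl
        (fun a ha c => hsup a (by rw [support_cons]; exact List.mem_cons_of_mem _ ha) c)
      exact ⟨z, Walk.cons hyy' w', ht, by simp [support_cons, hmap]⟩
    · exact absurd rfl (hb c)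

/-- In a path, an edge joining the two endpoints forces the path to have length 1. -/
lemma path_edge_end {W : Type*} {H : SimpleGraph W} {a b : W} (p : H.Walk a b)
    (hp : p.IsPath) (he : s(a, b) ∈ p.edges) : p.length = 1 := by
  cases p with
  | nil => simp at he
  | @cons _ b' _ h q =>
    rw [edges_cons] at he
    rcases List.mem_cons.mp he with h' | h'
    · rw [Sym2.eq_iff] at h'
      rcases h' with ⟨-, hb⟩ | ⟨h1, -⟩
      · subst hb
        have hq : q = Walk.nil := Walk.isPath_iff_eq_nil.mp hp.of_cons
        subst hq
        simp
      · exact absurd h1 h.ne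
    · exact absurd (Walk.fst_mem_support_of_mem_edges q h')
        ((Walk.cons_isPath_iff h q).mp hp).2

/-- A Hamiltonian path of the split graph between the two copies of `x` yields a
Hamiltonian cycle of `G`. -/
lemma exists_ham_cycle (G : SimpleGraph V) (hV : 3 ≤ Fintype.card V) (x : V)
    {s t : V ⊕ Unit} (hst : s ≠ t) (hfs : fmap x s = x) (hft : fmap x t = x)
    (w : (splitVertex G x).Walk s t) (hw : w.IsHamiltonian) :
    ∃ (a : V) (c : G.Walk a a), c.IsHamiltonianCycle := by
  obtain ⟨w₀, h, q, rfl⟩ := w.exists_eq_cons_of_ne hst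
  have hs_not : s ∉ q.support := by
    have h1 := hw s
    rw [support_cons, ccs] at h1
    exact cz.mp (by omega)
  have hq1 : ∀ a, a ≠ s → q.support.count a = 1 := by
    intro a ha
    have h1 := hw a
    rwa [support_cons, ccn ha] at h1
  have hnodup : q.support.Nodup := by
    rw [List.nodup_iff_count_le_one]
    intro a
    by_cases ha : a = s
    · subst ha; simp [cz.mpr hs_not]
    · exact le_of_eq (hq1 a ha)
  have hset : ∀ a : V ⊕ Unit, fmap x a = x → a = Sum.inl x ∨ a = Sum.inr () := by
    rintro (a | ⟨⟩) h
    · exact Or.inl (by rw [show a = x from h])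
    · exact Or.inr rfl
  have hst' : (s = Sum.inl x ∧ t = Sum.inr ()) ∨ (s = Sum.inr () ∧ t = Sum.inl x) := by
    rcases hset s hfs with hs1 | hs1 <;> rcases hset t hft with ht1 | ht1
    · exact absurd (hs1.trans ht1.symm) hst
    · exact Or.inl ⟨hs1, ht1⟩
    · exact Or.inr ⟨hs1, ht1⟩
    · exact absurd (hs1.trans ht1.symm) hst
  have hinj : ∀ a ∈ q.support, ∀ b ∈ q.support, fmap x a = fmap x b → a = b := by
    intro a ha b hb hab
    rcases a with a | ⟨⟩ <;> rcases b with b | ⟨⟩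
    · simp only [fmap, Sum.elim_inl, id] at hab
      exact congrArg _ hab
    · simp only [fmap, Sum.elim_inl, Sum.elim_inr, id] at hab
      subst hab
      exfalso
      rcases hst' with ⟨hs1, ht1⟩ | ⟨hs1, ht1⟩
      · exact hs_not (by rw [hs1]; exact ha)
      · exact hs_not (by rw [hs1]; exact hb)
    · simp only [fmap, Sum.elim_inl, Sum.elim_inr, id] at hab
      subst hab
      exfalso
      rcases hst' with ⟨hs1, ht1⟩ | ⟨hs1, ht1⟩
      · exact hs_not (by rw [hs1]; exact hb)
      · exact hs_not (by rw [hs1]; exact ha)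
    · rfl
  have hcard : Fintype.card (V ⊕ Unit) = Fintype.card V + 1 := by simp
  have hlen := hw.length_eq
  have hlc : (Walk.cons h q).length = q.length + 1 := by simp
  have hql : 2 ≤ q.length := by omega
  -- the homomorphism collapsing the two copies of x
  let F : splitVertex G x →g G := ⟨fmap x, fun h => adj_fmap h⟩
  have hFcoe : ⇑F = fmap x := rfl
  have hxw₀ : G.Adj x (fmap x w₀) := by
    have h' := adj_fmap h
    rwa [hfs] at h'
  have hq_path : q.IsPath := (Walk.isPath_def q).mpr hnodup
  refine ⟨x, Walk.cons hxw₀ ((q.map F).copy rfl hft), ?_⟩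
  rw [Walk.isHamiltonianCycle_iff_isCycle_and_support_count_tail_eq_one]
  constructor
  · rw [SimpleGraph.Walk.cons_isCycle_iff]
    constructor
    · rw [Walk.isPath_def, support_copy, Walk.support_map, hFcoe]
      exact List.Nodup.map_on hinj hnodup
    · rw [edges_copy, edges_map]
      intro hmem
      obtain ⟨e, he, hme⟩ := List.mem_map.mp hmem
      revert he hme
      refine Sym2.ind (fun z₁ z₂ => ?_) e
      intro he hme
      rw [Sym2.map_pair_eq, Sym2.eq_iff, hFcoe] at hme
      have hend : s(w₀, t) ∈ q.edges → False := by
        intro hend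
        have := path_edge_end q hq_path hend
        omega
      have hz₁mem : z₁ ∈ q.support := Walk.fst_mem_support_of_mem_edges q he
      have hz₂mem : z₂ ∈ q.support := Walk.snd_mem_support_of_mem_edges q he
      rcases hme with ⟨hz₁, hz₂⟩ | ⟨hz₁, hz₂⟩
      · -- fmap z₁ = x, fmap z₂ = fmap w₀
        have hz₁t : z₁ = t := by
          rcases hset z₁ hz₁ with rfl | rfl <;> rcases hst' with ⟨hs1, ht1⟩ | ⟨hs1, ht1⟩
          · exact absurd hz₁mem (hs1 ▸ hs_not)
          · exact ht1.symm
          · exact ht1.symm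
          · exact absurd hz₁mem (hs1 ▸ hs_not)
        have hz₂w : z₂ = w₀ := hinj z₂ hz₂mem w₀ q.start_mem_support hz₂
        subst hz₁t; subst hz₂w
        rw [Sym2.eq_swap] at he
        exact hend he
      · -- fmap z₁ = fmap w₀, fmap z₂ = x
        have hz₂t : z₂ = t := by
          rcases hset z₂ hz₂ with rfl | rfl <;> rcases hst' with ⟨hs1, ht1⟩ | ⟨hs1, ht1⟩
          · exact absurd hz₂mem (hs1 ▸ hs_not)
          · exact ht1.symm
          · exact ht1.symm
          · exact absurd hz₂mem (hs1 ▸ hs_not)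
        have hz₁w : z₁ = w₀ := hinj z₁ hz₁mem w₀ q.start_mem_support hz₁
        subst hz₂t; subst hz₁w
        exact hend he
  · intro a
    rw [support_cons, List.tail_cons, support_copy, Walk.support_map, hFcoe, count_fmap]
    by_cases ha : a = x
    · rw [if_pos ha, ha]
      rcases hst' with ⟨hs1, ht1⟩ | ⟨hs1, ht1⟩
      · have h1 : q.support.count (Sum.inl x) = 0 := by
          rw [← hs1]; exact cz.mpr hs_not
        have h2 : q.support.count (Sum.inr ()) = 1 := by
          rw [← ht1]; exact hq1 t (Ne.symm hst)
        omega
      · have h1 : q.support.count (Sum.inr ()) = 0 := by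
          rw [← hs1]; exact cz.mpr hs_not
        have h2 : q.support.count (Sum.inl x) = 1 := by
          rw [← ht1]; exact hq1 t (Ne.symm hst)
        omega
    · rw [if_neg ha]
      refine hq1 (Sum.inl a) ?_
      intro hcon
      apply ha
      rw [← hfs, ← hcon]
      rfl

/-- Core lemma: if a Hamiltonian path of the doubled graph decomposes at the two
connector vertices, we get a contradiction. -/
lemma no_ham_path_aux (G : SimpleGraph V) (hV : 3 ≤ Fintype.card V) (x : V)
    (hG : ¬ ∃ (a : V) (c : G.Walk a a), c.IsHamiltonianCycle)
    {u v : (Fin 2 × (V ⊕ Unit)) ⊕ Fin 2} {c d : Fin 2} (hcd : c ≠ d)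
    (s1 : (doubledGraph G x).Walk u (Sum.inr c))
    (m : (doubledGraph G x).Walk (Sum.inr c) (Sum.inr d))
    (s2 : (doubledGraph G x).Walk (Sum.inr d) v)
    (hp : (s1.append (m.append s2)).IsHamiltonian) : False := by
  have hfin : ∀ e : Fin 2, e = c ∨ e = d := by
    have h := (by decide : ∀ c d e : Fin 2, c ≠ d → e = c ∨ e = d)
    exact fun e => h c d e hcd
  obtain ⟨w₁, h₁, m', rfl⟩ := m.exists_eq_cons_of_ne (fun hh => hcd (Sum.inr.inj hh))
  obtain ⟨i, rfl⟩ := adj_inr.mp h₁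
  have hcount : ∀ a, s1.support.count a + (m'.support.count a + s2.support.tail.count a) = 1 := by
    intro a
    have h1 := hp a
    rw [support_append, support_append, support_cons, List.cons_append, List.tail_cons,
      cap, cap] at h1
    omega
  have hm'_end : (Sum.inr d : (Fin 2 × (V ⊕ Unit)) ⊕ Fin 2) ∈ m'.support :=
    m'.end_mem_support
  have hs1_end : (Sum.inr c : (Fin 2 × (V ⊕ Unit)) ⊕ Fin 2) ∈ s1.support :=
    s1.end_mem_support
  have hc_s1 : s1.support.count (Sum.inr c) = 1 := by
    have h1 := hcount (Sum.inr c)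
    have h2 := cpos.mpr hs1_end
    omega
  have hc_m' : m'.support.count (Sum.inr c) = 0 := by
    have h1 := hcount (Sum.inr c)
    have h2 := cpos.mpr hs1_end
    omega
  have hc_s2 : s2.support.tail.count (Sum.inr c) = 0 := by
    have h1 := hcount (Sum.inr c)
    have h2 := cpos.mpr hs1_end
    omega
  have hd_m' : m'.support.count (Sum.inr d) = 1 := by
    have h1 := hcount (Sum.inr d)
    have h2 := cpos.mpr hm'_end
    omega
  have hd_s1 : s1.support.count (Sum.inr d) = 0 := by
    have h1 := hcount (Sum.inr d)
    have h2 := cpos.mpr hm'_end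
    omega
  have hd_s2 : s2.support.tail.count (Sum.inr d) = 0 := by
    have h1 := hcount (Sum.inr d)
    have h2 := cpos.mpr hm'_end
    omega
  have hne_dc : (Sum.inr d : (Fin 2 × (V ⊕ Unit)) ⊕ Fin 2) ≠ Sum.inl (i, vxc x c) := by simp
  obtain ⟨w₂, h₂, m₂, hm₂⟩ := m'.reverse.exists_eq_cons_of_ne hne_dc
  obtain ⟨j, rfl⟩ := adj_inr.mp h₂
  have hm'supp : m'.support.reverse = Sum.inr d :: m₂.support := by
    rw [← support_reverse, hm₂, support_cons]
  have hcnt_m₂ : ∀ a, m'.support.count a = (Sum.inr d :: m₂.support).count a := by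
    intro a
    rw [← crev, hm'supp]
  have hnoinr_m₂ : ∀ a ∈ m₂.support, ∀ e : Fin 2, a ≠ Sum.inr e := by
    intro a ha e hae
    subst hae
    rcases hfin e with rfl | rfl
    · have h1 := hcnt_m₂ (Sum.inr e)
      rw [hc_m', ccn (fun hh => hcd (Sum.inr.inj hh))] at h1
      have h2 := cpos.mpr ha
      omega
    · have h1 := hcnt_m₂ (Sum.inr e)
      rw [hd_m', ccs] at h1
      have h2 := cpos.mpr ha
      omega
  obtain ⟨z, w', htz, hmap⟩ := proj m₂ j (vxc x d) rfl hnoinr_m₂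
  obtain ⟨rfl, rfl⟩ : i = j ∧ vxc x c = z := by simpa using htz
  have hstart_m' : Sum.inl (i, vxc x c) ∈ m'.support := m'.start_mem_support
  have hstartd : Sum.inl (i, vxc x d) ∈ m'.support := by
    have h1 : Sum.inl (i, vxc x d) ∈ m₂.support := m₂.start_mem_support
    have h2 : Sum.inl (i, vxc x d) ∈ m'.support.reverse := by
      rw [hm'supp]; exact List.mem_cons_of_mem _ h1
    exact List.mem_reverse.mp h2
  -- no vertex of copy i occurs in s1
  have A1 : ∀ z0 : V ⊕ Unit, Sum.inl (i, z0) ∉ s1.support := by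
    by_cases hu : u = Sum.inr c
    · subst hu
      cases s1 with
      | nil => intro z0; simp
      | @cons _ b _ h₅ q₅ =>
        exfalso
        have h6 : (Sum.inr c : (Fin 2 × (V ⊕ Unit)) ⊕ Fin 2) ∈ q₅.support :=
          q₅.end_mem_support
        rw [support_cons, ccs] at hc_s1
        have := cpos.mpr h6
        omega
    · obtain ⟨w₃, h₃, s₃, hs₃⟩ := s1.reverse.exists_eq_cons_of_ne (Ne.symm hu)
      obtain ⟨k, rfl⟩ := adj_inr.mp h₃
      have hs1supp : s1.support.reverse = Sum.inr c :: s₃.support := by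
        rw [← support_reverse, hs₃, support_cons]
      have hcnt_s₃ : ∀ a, s1.support.count a = (Sum.inr c :: s₃.support).count a := by
        intro a
        rw [← crev, hs1supp]
      have hnoinr₃ : ∀ a ∈ s₃.support, ∀ e : Fin 2, a ≠ Sum.inr e := by
        intro a ha e hae
        subst hae
        rcases hfin e with rfl | rfl
        · have h1 := hcnt_s₃ (Sum.inr e)
          rw [hc_s1, ccs] at h1
          have h2 := cpos.mpr ha
          omega
        · have h1 := hcnt_s₃ (Sum.inr e)
          rw [hd_s1, ccn (fun hh => hcd (Sum.inr.inj hh).symm)] at h1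
          have h2 := cpos.mpr ha
          omega
      obtain ⟨z₃, w₃', _, hmap₃⟩ := proj s₃ k (vxc x c) rfl hnoinr₃
      have hki : k ≠ i := by
        rintro rfl
        have hmem : Sum.inl (k, vxc x c) ∈ s₃.support := s₃.start_mem_support
        have hmem' : Sum.inl (k, vxc x c) ∈ s1.support := by
          rw [← List.mem_reverse, hs1supp]
          exact List.mem_cons_of_mem _ hmem
        have h1 := hcount (Sum.inl (k, vxc x c))
        have h2 := cpos.mpr hmem'
        have h3 := cpos.mpr hstart_m'
        omega
      intro z0 hz0
      rw [← List.mem_reverse, hs1supp] at hz0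
      rcases List.mem_cons.mp hz0 with h' | h'
      · simp at h'
      · rw [hmap₃] at h'
        obtain ⟨y', _, hy'⟩ := List.mem_map.mp h'
        simp only [Sum.inl.injEq, Prod.mk.injEq] at hy'
        exact hki hy'.1
  -- no vertex of copy i occurs in the tail of s2
  have A2 : ∀ z0 : V ⊕ Unit, Sum.inl (i, z0) ∉ s2.support.tail := by
    cases s2 with
    | nil => intro z0; simp
    | @cons _ b _ h₄ s₄ =>
      obtain ⟨l, rfl⟩ := adj_inr.mp h₄
      have htl : (Walk.cons h₄ s₄).support.tail = s₄.support := by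
        rw [support_cons, List.tail_cons]
      rw [htl] at hc_s2 hd_s2 ⊢
      have hnoinr₄ : ∀ a ∈ s₄.support, ∀ e : Fin 2, a ≠ Sum.inr e := by
        intro a ha e hae
        subst hae
        rcases hfin e with rfl | rfl
        · have h2 := cpos.mpr ha
          omega
        · have h2 := cpos.mpr ha
          omega
      obtain ⟨z₄, w₄', _, hmap₄⟩ := proj s₄ l (vxc x d) rfl hnoinr₄
      have hli : l ≠ i := by
        rintro rfl
        have hmem : Sum.inl (l, vxc x d) ∈ s₄.support := s₄.start_mem_support
        have h7 := hcount (Sum.inl (l, vxc x d))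
        have h8 := cpos.mpr hstartd
        have h9 : 0 < (Walk.cons h₄ s₄).support.tail.count (Sum.inl (l, vxc x d)) := by
          rw [htl]
          exact cpos.mpr hmem
        omega
      intro z0 hz0
      rw [hmap₄] at hz0
      obtain ⟨y', _, hy'⟩ := List.mem_map.mp hz0
      simp only [Sum.inl.injEq, Prod.mk.injEq] at hy'
      exact hli hy'.1
  -- the middle walk projects to a Hamiltonian path of the split graph
  have hham : w'.IsHamiltonian := by
    intro z0
    have h1 := hcount (Sum.inl (i, z0))
    have h2 : s1.support.count (Sum.inl (i, z0)) = 0 := cz.mpr (A1 z0)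
    have h3 : s2.support.tail.count (Sum.inl (i, z0)) = 0 := cz.mpr (A2 z0)
    have h4 := hcnt_m₂ (Sum.inl (i, z0))
    rw [ccn (by simp)] at h4
    have h5 : m₂.support.count (Sum.inl (i, z0)) = 1 := by omega
    rw [hmap] at h5
    have hfinj : Function.Injective (fun u : V ⊕ Unit => (Sum.inl (i, u) :
        (Fin 2 × (V ⊕ Unit)) ⊕ Fin 2)) := fun a b hh => by simpa using hh
    rwa [List.count_map_of_injective _ _ hfinj] at h5
  have hne : vxc x d ≠ vxc x c := by
    have h := (by decide : ∀ c d : Fin 2, c ≠ d → (c = 0 ∧ d = 1) ∨ (c = 1 ∧ d = 0))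
    rcases h c d hcd with ⟨rfl, rfl⟩ | ⟨rfl, rfl⟩ <;> simp [vxc]
  exact hG (exists_ham_cycle G hV x hne (fmap_vxc d) (fmap_vxc c) w' hham)

end HamAux

/-- If `G` (with at least 3 vertices) has no Hamiltonian cycle, then the graph `G'` produced by
the splitting-and-doubling construction has no Hamiltonian path. -/
theorem stmt_2 {V : Type*} [Fintype V] [DecidableEq V] (G : SimpleGraph V)
    (hV : 3 ≤ Fintype.card V) (x : V)
    (hG : ¬ ∃ (a : V) (c : G.Walk a a), c.IsHamiltonianCycle) :
    ¬ ∃ (u v : (Fin 2 × (V ⊕ Unit)) ⊕ Fin 2) (p : (doubledGraph G x).Walk u v),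
      p.IsHamiltonian := by
  rintro ⟨u, v, p, hp⟩
  have ha2 : (Sum.inr 0 : (Fin 2 × (V ⊕ Unit)) ⊕ Fin 2) ∈ p.support := hp.mem_support _
  have hspec := p.take_spec ha2
  have hb2 : (Sum.inr 1 : (Fin 2 × (V ⊕ Unit)) ⊕ Fin 2) ∈ p.support := hp.mem_support _
  rw [← hspec, SimpleGraph.Walk.mem_support_append_iff] at hb2
  rcases hb2 with hb | hb
  · have hq := (p.takeUntil _ ha2).take_spec hb
    apply HamAux.no_ham_path_aux G hV x hG (c := 1) (d := 0) (by decide)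
      ((p.takeUntil _ ha2).takeUntil _ hb) ((p.takeUntil _ ha2).dropUntil _ hb)
      (p.dropUntil _ ha2)
    rw [SimpleGraph.Walk.append_assoc, hq, hspec]
    exact hp
  · have hr := (p.dropUntil _ ha2).take_spec hb
    apply HamAux.no_ham_path_aux G hV x hG (c := 0) (d := 1) (by decide)
      (p.takeUntil _ ha2) ((p.dropUntil _ ha2).takeUntil _ hb)
      ((p.dropUntil _ ha2).dropUntil _ hb)
    rw [hr, hspec]
    exact hp
end

section
/- For any binary string b of length l, the string enc(b) ++ [0,1,1,1,0] ++ enc(b) contains the substring 111 exactly once, namely at the center (positions 2l+1 through 2l+3, 0-indexed starting at 2l+1). -/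
def enc (b : List Bool) : List Bool := b.flatMap (fun x => [x, !x])

lemma enc_cons (x : Bool) (xs : List Bool) : enc (x :: xs) = x :: (!x) :: enc xs := rfl

lemma enc_length (b : List Bool) : (enc b).length = 2 * b.length := by
  induction b with
  | nil => rfl
  | cons x xs ih => simp [enc_cons, ih]; ring

lemma encA (b : List Bool) (k : ℕ) :
    (enc b)[2*k]? = b[k]? ∧ (enc b)[2*k+1]? = Option.map (!·) (b[k]?) := by
  induction b generalizing k with
  | nil => simp [enc]
  | cons x xs ih =>
    cases k with
    | zero => simp [enc_cons]
    | succ k =>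
      have := ih k
      simpa [enc_cons, show 2*(k+1) = 2*k+1+1 by ring, show 2*(k+1)+1 = 2*k+1+1+1 by ring]
        using this

lemma no3 (b : List Bool) (i : ℕ) :
    ¬((enc b)[i]? = some true ∧ (enc b)[i+1]? = some true ∧
      (enc b)[i+2]? = some true) := by
  rintro ⟨h0, h1, h2⟩
  rcases Nat.even_or_odd i with ⟨k, hk⟩ | ⟨k, hk⟩
  · obtain ⟨ha, hb⟩ := encA b k
    rw [show i = 2*k by omega] at h0
    rw [show i + 1 = 2*k+1 by omega] at h1
    rw [ha] at h0; rw [hb, h0] at h1; simp at h1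
  · obtain ⟨ha, hb⟩ := encA b (k+1)
    rw [show i + 1 = 2*(k+1) by omega] at h1
    rw [show i + 2 = 2*(k+1)+1 by omega] at h2
    rw [ha] at h1; rw [hb, h1] at h2; simp at h2

/-- For a binary string `b` of length `l`, the string `enc(b) ++ [0,1,1,1,0] ++ enc(b)` contains
the substring `111` exactly once, namely starting at position `2l + 1` (0-indexed). -/
theorem stmt_8 (l : ℕ) (b : List Bool) (hb : b.length = l) :
    ∀ i : ℕ,
      ((enc b ++ [false, true, true, true, false] ++ enc b)[i]? = some true ∧
       (enc b ++ [false, true, true, true, false] ++ enc b)[i + 1]? = some true ∧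
       (enc b ++ [false, true, true, true, false] ++ enc b)[i + 2]? = some true) ↔
      i = 2 * l + 1 := by
  intro i
  have hE : (enc b).length = 2 * l := by rw [enc_length, hb]
  set E := enc b with hEdef
  set M : List Bool := [false, true, true, true, false] with hM
  have hleft : ∀ j, j < 2 * l → (E ++ M ++ E)[j]? = E[j]? := by
    intro j hj
    rw [List.append_assoc, List.getElem?_append_left (by omega)]
  have hmid : ∀ j, j < 5 → (E ++ M ++ E)[2 * l + j]? = M[j]? := by
    intro j hj
    rw [List.append_assoc, List.getElem?_append_right (by omega), hE,
      Nat.add_sub_cancel_left, List.getElem?_append_left (by simp [hM]; omega)]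
  have hright : ∀ j, (E ++ M ++ E)[2 * l + 5 + j]? = E[j]? := by
    intro j
    rw [List.append_assoc, List.getElem?_append_right (by omega), hE,
      List.getElem?_append_right (by simp [hM]; omega)]
    congr 1
    simp [hM]; omega
  constructor
  · rintro ⟨h0, h1, h2⟩
    by_contra hne
    rcases (by omega : i + 2 < 2 * l ∨ (2 * l ≤ i + 2 ∧ i ≤ 2 * l) ∨
        (2 * l + 2 ≤ i ∧ i ≤ 2 * l + 4) ∨ 2 * l + 5 ≤ i) with h | ⟨h, h'⟩ | ⟨h, h'⟩ | h
    · rw [hleft i (by omega)] at h0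
      rw [hleft (i+1) (by omega)] at h1
      rw [hleft (i+2) (by omega)] at h2
      exact no3 b i ⟨h0, h1, h2⟩
    · have h20 : (E ++ M ++ E)[2 * l]? = M[0]? := by
        simpa using hmid 0 (by omega)
      rcases (by omega : i = 2*l ∨ i + 1 = 2*l ∨ i + 2 = 2*l) with e | e | e
      · rw [e, h20] at h0; simp [hM] at h0
      · rw [e, h20] at h1; simp [hM] at h1
      · rw [e, h20] at h2; simp [hM] at h2
    · have h24 := hmid 4 (by omega)
      rcases (by omega : i = 2*l+4 ∨ i + 1 = 2*l+4 ∨ i + 2 = 2*l+4) with e | e | e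
      · rw [e, h24] at h0; simp [hM] at h0
      · rw [e, h24] at h1; simp [hM] at h1
      · rw [e, h24] at h2; simp [hM] at h2
    · obtain ⟨j, rfl⟩ : ∃ j, i = 2*l+5+j := ⟨i - (2*l+5), by omega⟩
      rw [hright j] at h0
      rw [show 2*l+5+j+1 = 2*l+5+(j+1) by omega, hright (j+1)] at h1
      rw [show 2*l+5+j+2 = 2*l+5+(j+2) by omega, hright (j+2)] at h2
      exact no3 b j ⟨h0, h1, h2⟩
  · rintro rfl
    refine ⟨?_, ?_, ?_⟩
    · rw [hmid 1 (by omega)]; rfl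
    · rw [show 2*l+1+1 = 2*l+2 by omega, hmid 2 (by omega)]; rfl
    · rw [show 2*l+1+2 = 2*l+3 by omega, hmid 3 (by omega)]; rfl
end

section
/- If a pair of cyclic strings (s, t) of length n matches with shift d and also matches with shift d', and gcd(n, d − d') = g, then s is periodic with period g (i.e., s_{i} = s_{i+g} for all i, indices mod n). -/
/-- If a pair of cyclic strings `(s, t)` of length `n` matches with shift `d` and also with
shift `d'`, and `gcd(n, d − d') = g`, then `s` is periodic with period `g`. -/
theorem stmt_10 {A : Type*} (n d d' : ℕ) (hdd : d' ≤ d) (s t : ZMod n → A)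
    (h : ∀ i : ZMod n, t i = s (i + (d : ZMod n)))
    (h' : ∀ i : ZMod n, t i = s (i + (d' : ZMod n)))
    (g : ℕ) (hg : g = Nat.gcd n (d - d')) :
    ∀ i : ZMod n, s i = s (i + (g : ZMod n)) := by
  set e := d - d' with he
  have hd : d = d' + e := by omega
  have key : ∀ j : ZMod n, s j = s (j + (e : ZMod n)) := by
    intro j
    have h1 := h' (j - (d' : ZMod n))
    have h2 := h (j - (d' : ZMod n))
    rw [sub_add_cancel] at h1
    rw [hd] at h2
    push_cast at h2
    rw [show j - (d' : ZMod n) + ((d' : ZMod n) + (e : ZMod n)) = j + e by ring] at h2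
    rw [← h1, h2]
  have key2 : ∀ k : ℤ, ∀ j : ZMod n, s j = s (j + k * (e : ZMod n)) := by
    intro k
    induction k using Int.induction_on with
    | zero => intro j; simp
    | succ m ih =>
        intro j
        have h3 : j + (((m : ℤ) + 1 : ℤ) : ZMod n) * (e : ZMod n)
            = (j + ((m : ℤ) : ZMod n) * (e : ZMod n)) + (e : ZMod n) := by push_cast; ring
        rw [h3, ← key]
        exact ih j
    | pred m ih =>
        intro j
        have h3 : j + ((-(m : ℤ) : ℤ) : ZMod n) * (e : ZMod n)
            = (j + ((-(m : ℤ) - 1 : ℤ) : ZMod n) * (e : ZMod n)) + (e : ZMod n) := by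
          push_cast; ring
        rw [ih j, h3, ← key]
  intro i
  have hb : (g : ZMod n) = ((Int.gcdB n e : ℤ) * (e : ℤ) : ℤ) := by
    have := Int.gcd_eq_gcd_ab (n : ℤ) (e : ℤ)
    have hg' : (g : ℤ) = (n : ℤ) * Int.gcdA n e + (e : ℤ) * Int.gcdB n e := by
      rw [hg]; rw [← Int.gcd_natCast_natCast]; exact this
    calc (g : ZMod n) = ((g : ℤ) : ZMod n) := by push_cast; ring
      _ = (((n : ℤ) * Int.gcdA n e + (e : ℤ) * Int.gcdB n e : ℤ) : ZMod n) := by rw [hg']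
      _ = _ := by push_cast [ZMod.natCast_self]; ring
  have := key2 (Int.gcdB n e) i
  rw [this, hb]
  push_cast
  ring_nf
end
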